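/- Discretization-step rule for the planar arm: let δ > 0 and θ > 0 satisfy θ · ∑_{k=1}^{n} ∑_{i=k}^{n} l_i < δ. Then for all configurations q, q' ∈ ℝⁿ with |q_k − q'_k| ≤ θ for every k, the end-effector displacement satisfies ‖p_n(q) − p_n(q')‖ < δ. Hence choosing the angular grid resolution θ below δ / ( ∑_{k=1}^{n} ∑_{i=k}^{n} l_i ) guarantees that moving between adjacent grid configurations displaces the tip by less than the minimum obstacle size or passage width δ. -/

import Mathlib

/-- The unit vector in the plane at angle `α`. -/
noncomputable def unitVec (α : ℝ) : EuclideanSpace ℝ (Fin 2) :=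
  WithLp.toLp 2 ![Real.cos α, Real.sin α]

/-- Cumulative angle of link `i` (0-indexed): `φ i = q 0 + ⋯ + q i`. -/
noncomputable def cumAngle {n : ℕ} (q : Fin n → ℝ) (i : Fin n) : ℝ :=
  ∑ k ∈ Finset.Iic i, q k

/-- Position of joint `j` (`j = 0, …, n`, 0-indexed): `p j = ∑_{i < j} l i • unitVec (φ i)`,
with the base `p 0 = (0,0)` fixed at the origin. -/
noncomputable def jointPos {n : ℕ} (l : Fin n → ℝ) (q : Fin n → ℝ) (j : ℕ) :
    EuclideanSpace ℝ (Fin 2) :=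
  ∑ i ∈ Finset.univ.filter (fun i : Fin n => (i : ℕ) < j), l i • unitVec (cumAngle q i)

/-- Body of link `j` (0-indexed): the closed segment from joint `j` to joint `j+1`. -/
noncomputable def linkBody {n : ℕ} (l : Fin n → ℝ) (q : Fin n → ℝ) (j : Fin n) :
    Set (EuclideanSpace ℝ (Fin 2)) :=
  segment ℝ (jointPos l q j) (jointPos l q (j + 1))

lemma unitVec_dist_le (a b : ℝ) : ‖unitVec a - unitVec b‖ ≤ |a - b| := by
  have h : ‖unitVec a - unitVec b‖ =
      Real.sqrt ((Real.cos a - Real.cos b)^2 + (Real.sin a - Real.sin b)^2) := by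
    rw [EuclideanSpace.norm_eq]
    congr 1
    simp [Fin.sum_univ_two, unitVec, sq_abs]
  rw [h]
  have h2 : (Real.cos a - Real.cos b)^2 + (Real.sin a - Real.sin b)^2
      = 4 * Real.sin ((a-b)/2)^2 := by
    have h3 := Real.sin_sq_eq_half_sub ((a-b)/2)
    rw [show 2*((a-b)/2) = a - b by ring] at h3
    have hc := Real.cos_sub a b
    nlinarith [Real.sin_sq_add_cos_sq a, Real.sin_sq_add_cos_sq b]
  rw [h2]
  have h4 : Real.sqrt (4 * Real.sin ((a-b)/2)^2) = 2 * |Real.sin ((a-b)/2)| := by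
    rw [show (4:ℝ) * Real.sin ((a-b)/2)^2 = (2 * |Real.sin ((a-b)/2)|)^2 by
      rw [mul_pow, sq_abs]; ring]
    exact Real.sqrt_sq (by positivity)
  rw [h4]
  calc 2 * |Real.sin ((a-b)/2)| ≤ 2 * |(a-b)/2| := by
        have := Real.abs_sin_le_abs (x := (a-b)/2); linarith
    _ = |a - b| := by rw [abs_div]; simp; ring


/-- Discretization-step rule for the planar arm: if the angular grid
resolution `θ` satisfies `θ * ∑ k ∑_{i ≥ k} l i < δ`, then any two configurations whose
joint values differ by at most `θ` in each coordinate displace the end-effector tip by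
less than `δ`. -/
theorem stmt_8 {n : ℕ} (l : Fin n → ℝ) (hl : ∀ i, 0 < l i)
    (δ θ : ℝ) (hδ : 0 < δ) (hθ : 0 < θ)
    (hres : θ * ∑ k : Fin n, ∑ i ∈ Finset.Ici k, l i < δ) :
    ∀ q q' : Fin n → ℝ, (∀ k : Fin n, |q k - q' k| ≤ θ) →
      ‖jointPos l q n - jointPos l q' n‖ < δ := by
  intro q q' hq
  have hfil : (Finset.univ.filter (fun i : Fin n => (i : ℕ) < n)) = Finset.univ := by
    apply Finset.filter_true_of_mem
    intro i _
    exact i.is_lt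
  have hdiff : jointPos l q n - jointPos l q' n
      = ∑ i : Fin n, l i • (unitVec (cumAngle q i) - unitVec (cumAngle q' i)) := by
    rw [jointPos, jointPos, hfil, ← Finset.sum_sub_distrib]
    exact Finset.sum_congr rfl (fun i _ => (smul_sub _ _ _).symm)
  rw [hdiff]
  have key : ‖∑ i : Fin n, l i • (unitVec (cumAngle q i) - unitVec (cumAngle q' i))‖
      ≤ ∑ i : Fin n, ∑ k ∈ Finset.Iic i, l i * θ := by
    refine (norm_sum_le _ _).trans (Finset.sum_le_sum fun i _ => ?_)
    rw [norm_smul, Real.norm_eq_abs, abs_of_pos (hl i)]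
    have h1 : ‖unitVec (cumAngle q i) - unitVec (cumAngle q' i)‖
        ≤ |cumAngle q i - cumAngle q' i| := unitVec_dist_le _ _
    have h2 : |cumAngle q i - cumAngle q' i| ≤ ∑ k ∈ Finset.Iic i, θ := by
      rw [cumAngle, cumAngle, ← Finset.sum_sub_distrib]
      exact (Finset.abs_sum_le_sum_abs _ _).trans
        (Finset.sum_le_sum fun k _ => hq k)
    calc l i * ‖unitVec (cumAngle q i) - unitVec (cumAngle q' i)‖
        ≤ l i * ∑ k ∈ Finset.Iic i, θ :=
          mul_le_mul_of_nonneg_left (h1.trans h2) (hl i).le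
      _ = ∑ k ∈ Finset.Iic i, l i * θ := by rw [Finset.mul_sum]
  have hswap : ∑ i : Fin n, ∑ k ∈ Finset.Iic i, l i * θ
      = θ * ∑ k : Fin n, ∑ i ∈ Finset.Ici k, l i := by
    rw [Finset.sum_comm' (s := Finset.univ) (t := fun i => Finset.Iic i)
      (t' := Finset.univ) (s' := fun k => Finset.Ici k)
      (f := fun i _ => l i * θ)
      (by intro x y; simp [Finset.mem_Iic, Finset.mem_Ici])]
    rw [Finset.mul_sum]
    refine Finset.sum_congr rfl fun k _ => ?_
    rw [Finset.mul_sum]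
    exact Finset.sum_congr rfl fun i _ => by ring
  exact lt_of_le_of_lt (key.trans_eq hswap) hres
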